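/- For a coalgebra homomorphism g : C → D over a field, the map α ↦ (α ⊗ id_C) ∘ Δ̲ is an isomorphism from End^{D-D}(C) (D-D-bicomodule endomorphisms of C) onto Hom^{D-C}(C, C □_D C) (D-C-bicomodule maps), with inverse F ↦ (id_C ⊗ ε) ∘ F. -/

import Mathlib

open TensorProduct LinearMap Coalgebra

noncomputable section

variable {K : Type*} [Field K] {C D : Type*}
  [AddCommGroup C] [Module K C] [Coalgebra K C]
  [AddCommGroup D] [Module K D] [Coalgebra K D]

/-- The left `D`-coaction `c ↦ g(c₍₁₎) ⊗ c₍₂₎` on `C` induced by `g : C → D`. -/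
def coactL (g : C →ₗc[K] D) : C →ₗ[K] D ⊗[K] C :=
  rTensor C g.toLinearMap ∘ₗ comul

/-- The right `D`-coaction `c ↦ c₍₁₎ ⊗ g(c₍₂₎)` on `C` induced by `g : C → D`. -/
def coactR (g : C →ₗc[K] D) : C →ₗ[K] C ⊗[K] D :=
  lTensor C g.toLinearMap ∘ₗ comul

/-- The cotensor product `C □_D C` as a subspace of `C ⊗ C`: the kernel of
`ρ^R ⊗ id - id ⊗ ρ^L : C ⊗ C → C ⊗ D ⊗ C`. -/
def cotensor (g : C →ₗc[K] D) : Submodule K (C ⊗[K] C) :=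
  LinearMap.ker ((TensorProduct.assoc K C D C).toLinearMap ∘ₗ rTensor C (coactR g)
    - lTensor C (coactL g))

/-- `α : C → C` is a `D`-`D`-bicomodule endomorphism. -/
def IsDD (g : C →ₗc[K] D) (α : C →ₗ[K] C) : Prop :=
  coactL g ∘ₗ α = lTensor D α ∘ₗ coactL g ∧
  coactR g ∘ₗ α = rTensor D α ∘ₗ coactR g

/-- `φ : C → C` is left `D`-colinear and right `C`-colinear. -/
def IsDC (g : C →ₗc[K] D) (φ : C →ₗ[K] C) : Prop :=
  coactL g ∘ₗ φ = lTensor D φ ∘ₗ coactL g ∧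
  comul ∘ₗ φ = rTensor C φ ∘ₗ comul

/-- The left `D`-coaction on `C ⊗ C` (through its first tensorand). -/
def coactL2 (g : C →ₗc[K] D) : C ⊗[K] C →ₗ[K] D ⊗[K] (C ⊗[K] C) :=
  (TensorProduct.assoc K D C C).toLinearMap ∘ₗ rTensor C (coactL g)

/-- `F : C → C ⊗ C` is a `D`-`C`-bicomodule map into `C □_D C`
(left `D`-colinear and right `C`-colinear). -/
def IsDChom (g : C →ₗc[K] D) (F : C →ₗ[K] C ⊗[K] C) : Prop :=
  coactL2 g ∘ₗ F = lTensor D F ∘ₗ coactL g ∧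
  (TensorProduct.assoc K C C C).symm.toLinearMap ∘ₗ lTensor C comul ∘ₗ F =
    rTensor C F ∘ₗ comul

/-- `F : C → C ⊗ C` is a `D`-`D`-bicomodule map (for the left and right `D`-comodule
structures of the `C`-`C`-bicomodule `C ⊗ C`). -/
def IsDDhom (g : C →ₗc[K] D) (F : C →ₗ[K] C ⊗[K] C) : Prop :=
  coactL2 g ∘ₗ F = lTensor D F ∘ₗ coactL g ∧
  ((TensorProduct.assoc K C C D).symm.toLinearMap ∘ₗ lTensor C (coactR g)) ∘ₗ F =
    rTensor D F ∘ₗ coactR g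

/-- The convolution product on `C* = Hom(C, K)`. -/
def conv (p q : C →ₗ[K] K) : C →ₗ[K] K :=
  (TensorProduct.lid K K).toLinearMap ∘ₗ TensorProduct.map p q ∘ₗ comul

/-- The centralizer `V_{C*}(D*)` of `g*(D*)` in the convolution algebra `C*`. -/
def Vcent (g : C →ₗc[K] D) : Set (C →ₗ[K] K) :=
  {p | ∀ d : D →ₗ[K] K, conv p (d ∘ₗ g.toLinearMap) = conv (d ∘ₗ g.toLinearMap) p}

/-- `η` represents an element of `(C □_D C)^{* D*}`, i.e. a `D*`-central functional on
the cotensor product: `g(c₍₁₎) η(c₍₂₎ ⊗ c') = η(c ⊗ c'₍₁₎) g(c'₍₂₎)` on `C □_D C`. -/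
def IsEtaInv (g : C →ₗc[K] D) (η : C ⊗[K] C →ₗ[K] K) : Prop :=
  ∀ z ∈ cotensor g,
    ((TensorProduct.rid K D).toLinearMap ∘ₗ TensorProduct.map g.toLinearMap η ∘ₗ
      (TensorProduct.assoc K C C C).toLinearMap ∘ₗ rTensor C comul) z =
    ((TensorProduct.lid K D).toLinearMap ∘ₗ TensorProduct.map η g.toLinearMap ∘ₗ
      (TensorProduct.assoc K C C C).symm.toLinearMap ∘ₗ lTensor C comul) z

/-- The iterated comultiplication `c ↦ c₍₁₎ ⊗ (c₍₂₎ ⊗ c₍₃₎)`. -/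
def comul2 : C →ₗ[K] C ⊗[K] (C ⊗[K] C) := lTensor C comul ∘ₗ comul

/-- The operator `c ⊗ c' ↦ η(c ⊗ c'₍₁₎) α(c'₍₂₎) ⊗ c'₍₃₎` on `C ⊗ C` built from a
quasibase pair `(η, α)`. -/
def quasiOp (η : C ⊗[K] C →ₗ[K] K) (α : C →ₗ[K] C) : C ⊗[K] C →ₗ[K] C ⊗[K] C :=
  (TensorProduct.lid K (C ⊗[K] C)).toLinearMap ∘ₗ
    TensorProduct.map η (rTensor C α) ∘ₗ
    (TensorProduct.assoc K C C (C ⊗[K] C)).symm.toLinearMap ∘ₗ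
    lTensor C comul2

/-- `g : C → D` is a left codepth two coalgebra homomorphism, expressed through the
existence of left coD2 quasibases `ηᵢ ∈ (C □_D C)^{* D*}`, `αᵢ ∈ End ᴰCᴰ` with
`c ⊗ c' = Σᵢ ηᵢ(c ⊗ c'₍₁₎) αᵢ(c'₍₂₎) ⊗ c'₍₃₎` on `C □_D C`  (equivalently, the
cotensor product `C □_D C` is a direct summand of a finite direct sum of copies of `C`
as `D`-`C`-bicomodules). -/
def LeftCoD2 (g : C →ₗc[K] D) : Prop :=
  ∃ N : ℕ, 0 < N ∧ ∃ (η : Fin N → (C ⊗[K] C →ₗ[K] K)) (α : Fin N → (C →ₗ[K] C)),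
    (∀ i, IsEtaInv g (η i)) ∧ (∀ i, IsDD g (α i)) ∧
    ∀ z ∈ cotensor g, ∑ i, quasiOp (η i) (α i) z = z

namespace EndDDAux

/-- the collapse map `(id ⊗ ε) : C ⊗ C → C`. -/
def mm : C ⊗[K] C →ₗ[K] C :=
  (TensorProduct.rid K C).toLinearMap ∘ₗ lTensor C (counit (R := K) (A := C))

lemma mm_comp_comul : mm ∘ₗ (comul : C →ₗ[K] C ⊗[K] C) = LinearMap.id := by
  ext c; simp [mm]

lemma mm_comul (c : C) : mm (comul c : C ⊗[K] C) = c :=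
  LinearMap.congr_fun mm_comp_comul c

/-- the other collapse map `(ε ⊗ id) : C ⊗ C → C`. -/
def nn : C ⊗[K] C →ₗ[K] C :=
  (TensorProduct.lid K C).toLinearMap ∘ₗ rTensor C (counit (R := K) (A := C))

lemma nn_comp_comul : nn ∘ₗ (comul : C →ₗ[K] C ⊗[K] C) = LinearMap.id := by
  ext c; simp [nn]

section Nat

variable {A B M N : Type*} [AddCommGroup A] [Module K A] [AddCommGroup B] [Module K B]
  [AddCommGroup M] [Module K M] [AddCommGroup N] [Module K N]

lemma map_swap_apply (f : A →ₗ[K] B) (h : M →ₗ[K] N) (z : A ⊗[K] M) :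
    rTensor N f (lTensor A h z) = lTensor B h (rTensor M f z) := by
  rw [← comp_apply, ← comp_apply, rTensor_comp_lTensor, lTensor_comp_rTensor]

lemma rid_nat_apply (f : A →ₗ[K] B) (z : A ⊗[K] K) :
    (TensorProduct.rid K B) (rTensor K f z) = f ((TensorProduct.rid K A) z) := by
  have : (TensorProduct.rid K B).toLinearMap ∘ₗ rTensor K f =
      f ∘ₗ (TensorProduct.rid K A).toLinearMap := by ext a; simp
  simpa using LinearMap.congr_fun this z

lemma assoc_rT_lT_apply (f : M →ₗ[K] N) (z : (A ⊗[K] M) ⊗[K] B) :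
    (TensorProduct.assoc K A N B) (rTensor B (lTensor A f) z) =
      lTensor A (rTensor B f) ((TensorProduct.assoc K A M B) z) := by
  have : (TensorProduct.assoc K A N B).toLinearMap ∘ₗ rTensor B (lTensor A f) =
      lTensor A (rTensor B f) ∘ₗ (TensorProduct.assoc K A M B).toLinearMap := by
    ext x y w; simp
  simpa using LinearMap.congr_fun this z

lemma assoc_rT_rT_apply (f : M →ₗ[K] N) (z : (M ⊗[K] A) ⊗[K] B) :
    (TensorProduct.assoc K N A B) (rTensor B (rTensor A f) z) =
      rTensor (A ⊗[K] B) f ((TensorProduct.assoc K M A B) z) := by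
  have : (TensorProduct.assoc K N A B).toLinearMap ∘ₗ rTensor B (rTensor A f) =
      rTensor (A ⊗[K] B) f ∘ₗ (TensorProduct.assoc K M A B).toLinearMap := by
    ext x y w; simp
  simpa using LinearMap.congr_fun this z

lemma assoc_symm_rT_apply (f : M →ₗ[K] N) (z : M ⊗[K] (A ⊗[K] B)) :
    (TensorProduct.assoc K N A B).symm (rTensor (A ⊗[K] B) f z) =
      rTensor B (rTensor A f) ((TensorProduct.assoc K M A B).symm z) := by
  have : (TensorProduct.assoc K N A B).symm.toLinearMap ∘ₗ rTensor (A ⊗[K] B) f =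
      rTensor B (rTensor A f) ∘ₗ (TensorProduct.assoc K M A B).symm.toLinearMap := by
    ext x y w; simp
  simpa using LinearMap.congr_fun this z

end Nat

lemma T6_apply (z : C ⊗[K] (C ⊗[K] C)) :
    rTensor C mm ((TensorProduct.assoc K C C C).symm z) = lTensor C nn z := by
  have : rTensor C (mm (K := K) (C := C)) ∘ₗ (TensorProduct.assoc K C C C).symm.toLinearMap =
      lTensor C nn := by
    ext x y w
    simp [mm, nn, TensorProduct.smul_tmul]
  simpa using LinearMap.congr_fun this z

lemma T7_apply (z : (D ⊗[K] C) ⊗[K] C) :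
    lTensor D mm ((TensorProduct.assoc K D C C) z) =
      (TensorProduct.rid K (D ⊗[K] C)) (lTensor (D ⊗[K] C) (counit (R := K) (A := C)) z) := by
  have : lTensor D (mm (K := K) (C := C)) ∘ₗ (TensorProduct.assoc K D C C).toLinearMap =
      (TensorProduct.rid K (D ⊗[K] C)).toLinearMap ∘ₗ
        lTensor (D ⊗[K] C) (counit (R := K) (A := C)) := by
    ext x y w
    simp [mm, TensorProduct.smul_tmul]
  simpa using LinearMap.congr_fun this z

/-- the collapse map `(id ⊗ ε) : D ⊗ C → D`. -/
def QQ : D ⊗[K] C →ₗ[K] D :=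
  (TensorProduct.rid K D).toLinearMap ∘ₗ lTensor D (counit (R := K) (A := C))

lemma T8_apply (z : (C ⊗[K] D) ⊗[K] C) :
    lTensor C QQ ((TensorProduct.assoc K C D C) z) =
      (TensorProduct.rid K (C ⊗[K] D)) (lTensor (C ⊗[K] D) (counit (R := K) (A := C)) z) := by
  have : lTensor C (QQ (K := K) (C := C) (D := D)) ∘ₗ
      (TensorProduct.assoc K C D C).toLinearMap =
      (TensorProduct.rid K (C ⊗[K] D)).toLinearMap ∘ₗ
        lTensor (C ⊗[K] D) (counit (R := K) (A := C)) := by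
    ext x y w
    simp [QQ, TensorProduct.smul_tmul]
  simpa using LinearMap.congr_fun this z

variable (g : C →ₗc[K] D)

lemma key1_apply (c : C) :
    (TensorProduct.assoc K C D C) (rTensor C (coactR g) (comul c)) =
      lTensor C (coactL g) (comul c) := by
  rw [coactR, rTensor_comp_apply, assoc_rT_lT_apply, coassoc_apply, coactL,
    ← lTensor_comp_apply]

lemma keyL_apply (c : C) :
    (TensorProduct.assoc K D C C) (rTensor C (coactL g) (comul c)) =
      lTensor D comul (coactL g c) := by
  rw [coactL, rTensor_comp_apply, assoc_rT_rT_apply, coassoc_apply, map_swap_apply]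
  rfl

lemma psi_phi (α : C →ₗ[K] C) : mm ∘ₗ (rTensor C α ∘ₗ comul) = α := by
  have h : mm (K := K) (C := C) ∘ₗ rTensor C α = α ∘ₗ mm := by
    refine LinearMap.ext fun z => ?_
    simp only [mm, comp_apply, LinearEquiv.coe_coe]
    rw [← map_swap_apply, rid_nat_apply]
  rw [← comp_assoc, h, comp_assoc, mm_comp_comul, comp_id]

lemma phi_rcol (α : C →ₗ[K] C) :
    (TensorProduct.assoc K C C C).symm.toLinearMap ∘ₗ
        lTensor C comul ∘ₗ (rTensor C α ∘ₗ comul) =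
      rTensor C (rTensor C α ∘ₗ comul) ∘ₗ comul := by
  ext c
  simp only [comp_apply, LinearEquiv.coe_coe]
  rw [← map_swap_apply, assoc_symm_rT_apply, coassoc_symm_apply, ← rTensor_comp_apply]

lemma phi_lcol (α : C →ₗ[K] C) (hα : coactL g ∘ₗ α = lTensor D α ∘ₗ coactL g) :
    coactL2 g ∘ₗ (rTensor C α ∘ₗ comul) =
      lTensor D (rTensor C α ∘ₗ comul) ∘ₗ coactL g := by
  ext c
  simp only [coactL2, comp_apply, LinearEquiv.coe_coe]
  rw [← rTensor_comp_apply, hα, rTensor_comp_apply, assoc_rT_lT_apply, keyL_apply,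
    ← lTensor_comp_apply]

lemma phi_mem (α : C →ₗ[K] C) (hα : coactR g ∘ₗ α = rTensor D α ∘ₗ coactR g) (c : C) :
    (rTensor C α ∘ₗ comul) c ∈ cotensor g := by
  simp only [cotensor, LinearMap.mem_ker, LinearMap.sub_apply, comp_apply, LinearEquiv.coe_coe,
    sub_eq_zero]
  rw [← rTensor_comp_apply, hα, rTensor_comp_apply, assoc_rT_rT_apply, key1_apply,
    map_swap_apply]

lemma phi_psi (F : C →ₗ[K] C ⊗[K] C)
    (hF : (TensorProduct.assoc K C C C).symm.toLinearMap ∘ₗ lTensor C comul ∘ₗ F =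
      rTensor C F ∘ₗ comul) :
    rTensor C (mm ∘ₗ F) ∘ₗ comul = F := by
  ext c
  have h2 := LinearMap.congr_fun hF c
  simp only [comp_apply, LinearEquiv.coe_coe] at h2 ⊢
  rw [rTensor_comp_apply, ← h2, T6_apply, ← lTensor_comp_apply, nn_comp_comul, lTensor_id,
    id_apply]

lemma psi_lcol (F : C →ₗ[K] C ⊗[K] C)
    (hF : coactL2 g ∘ₗ F = lTensor D F ∘ₗ coactL g) :
    coactL g ∘ₗ (mm ∘ₗ F) = lTensor D (mm ∘ₗ F) ∘ₗ coactL g := by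
  ext c
  have h1 := LinearMap.congr_fun hF c
  simp only [coactL2, comp_apply, LinearEquiv.coe_coe] at h1 ⊢
  rw [lTensor_comp_apply, ← h1, T7_apply, ← map_swap_apply, rid_nat_apply]
  rfl

lemma QQ_coactL : QQ ∘ₗ coactL g = g.toLinearMap := by
  ext c
  simp only [QQ, coactL, comp_apply, LinearEquiv.coe_coe]
  rw [← map_swap_apply, rid_nat_apply]
  exact congrArg _ (mm_comul c)

lemma psi_rcol (F : C →ₗ[K] C ⊗[K] C)
    (hF : (TensorProduct.assoc K C C C).symm.toLinearMap ∘ₗ lTensor C comul ∘ₗ F =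
      rTensor C F ∘ₗ comul)
    (hmem : ∀ c, F c ∈ cotensor g) :
    coactR g ∘ₗ (mm ∘ₗ F) = rTensor D (mm ∘ₗ F) ∘ₗ coactR g := by
  ext c
  have h2 := LinearMap.congr_fun hF c
  have h3 := hmem c
  simp only [cotensor, LinearMap.mem_ker, LinearMap.sub_apply, comp_apply, LinearEquiv.coe_coe,
    sub_eq_zero] at h3
  simp only [comp_apply, LinearEquiv.coe_coe] at h2 ⊢
  -- left side equals `lTensor C g' (F c)`
  have lhs : coactR g (mm (F c)) = lTensor C g.toLinearMap (F c) := by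
    have l1 : coactR g (mm (F c)) =
        lTensor C QQ ((TensorProduct.assoc K C D C) (rTensor C (coactR g) (F c))) := by
      rw [T8_apply, ← map_swap_apply, rid_nat_apply]
      rfl
    rw [l1, h3, ← lTensor_comp_apply, QQ_coactL]
  rw [lhs, coactR, comp_apply, map_swap_apply, rTensor_comp_apply, ← h2, T6_apply,
    ← lTensor_comp_apply, ← lTensor_comp_apply, comp_assoc, nn_comp_comul, comp_id]

end EndDDAux

open EndDDAux in
/-- for a coalgebra homomorphism `g : C → D` over a field, the map
`α ↦ (α ⊗ id) ∘ Δ̲` is an isomorphism from `End ᴰCᴰ` onto `Hom ᴰ⁻ᶜ(C, C □_D C)`, with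
inverse `F ↦ (id ⊗ ε) ∘ F`. -/
theorem endDD_iso_homDC (g : C →ₗc[K] D) :
    letI Φ : (C →ₗ[K] C) → (C →ₗ[K] C ⊗[K] C) := fun α => rTensor C α ∘ₗ comul
    letI Ψ : (C →ₗ[K] C ⊗[K] C) → (C →ₗ[K] C) := fun F =>
      (TensorProduct.rid K C).toLinearMap ∘ₗ lTensor C (counit (R := K) (A := C)) ∘ₗ F
    (Set.BijOn Φ {α | IsDD g α} {F | IsDChom g F ∧ ∀ c, F c ∈ cotensor g} ∧
      Set.InvOn Ψ Φ {α | IsDD g α} {F | IsDChom g F ∧ ∀ c, F c ∈ cotensor g}) := by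
  classical
  have hpsi : ∀ F : C →ₗ[K] C ⊗[K] C,
      (TensorProduct.rid K C).toLinearMap ∘ₗ lTensor C (counit (R := K) (A := C)) ∘ₗ F =
        mm ∘ₗ F := by
    intro F; rw [mm, comp_assoc]
  refine ⟨⟨?_, ?_, ?_⟩, ?_, ?_⟩
  · -- MapsTo
    rintro α ⟨hα1, hα2⟩
    exact ⟨⟨phi_lcol g α hα1, phi_rcol α⟩, phi_mem g α hα2⟩
  · -- InjOn
    rintro α _ β _ h
    dsimp only at h
    have : mm ∘ₗ (rTensor C α ∘ₗ comul) = mm ∘ₗ (rTensor C β ∘ₗ comul) := by rw [h]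
    rwa [psi_phi, psi_phi] at this
  · -- SurjOn
    rintro F ⟨⟨hF1, hF2⟩, hmem⟩
    exact ⟨mm ∘ₗ F, ⟨psi_lcol g F hF1, psi_rcol g F hF2 hmem⟩, phi_psi F hF2⟩
  · -- LeftInvOn
    rintro α _
    dsimp only
    rw [hpsi]
    exact psi_phi α
  · -- RightInvOn
    rintro F ⟨⟨hF1, hF2⟩, hmem⟩
    dsimp only
    rw [hpsi]
    exact phi_psi F hF2


end
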